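/- Let g ∈ ℝⁿ, let H ∈ ℝ^{n×n} be symmetric positive semidefinite, let d ∈ ℝⁿ, let θ₁ ∈ (0,1), π > 0, and let a ≥ 0. Write t = gᵀd + (1/2)dᵀHd. If −t + πa ≥ θ₁·π·a, then −t + πa ≥ θ₁²·(|t| + πa). -/
import Mathlib

noncomputable section

/-- `Vec n` is `ℝⁿ` with the Euclidean norm. -/
abbrev Vec (n : ℕ) := EuclideanSpace ℝ (Fin n)

/-- The dot product `gᵀd`. -/
def dotp {n : ℕ} (g d : Vec n) : ℝ := ∑ i, g i * d i

/-- The quadratic form `dᵀHd`. -/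
def quad {n : ℕ} (H : Matrix (Fin n) (Fin n) ℝ) (d : Vec n) : ℝ :=
  ∑ i, ∑ j, d i * H i j * d j

/-- If the penalty-parameter update condition `−t + πa ≥ θ₁πa` holds, where
`t = gᵀd + (1/2)dᵀHd` and `a ≥ 0`, then `−t + πa ≥ θ₁²(|t| + πa)`. -/
theorem merit_model_decrease_lower_bound
    {n : ℕ} (g : Vec n) (H : Matrix (Fin n) (Fin n) ℝ) (hH : H.PosSemidef)
    (d : Vec n) (θ1 π a : ℝ)
    (hθ1 : 0 < θ1) (hθ1' : θ1 < 1) (hπ : 0 < π) (ha : 0 ≤ a)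
    (h : -(dotp g d + (1/2) * quad H d) + π * a ≥ θ1 * π * a) :
    -(dotp g d + (1/2) * quad H d) + π * a
      ≥ θ1 ^ 2 * (|dotp g d + (1/2) * quad H d| + π * a) := by
  set t := dotp g d + (1/2) * quad H d with ht
  rcases abs_cases t with ⟨he, _⟩ | ⟨he, htneg⟩ <;> rw [he]
  · nlinarith [mul_nonneg hπ.le ha, sq_nonneg (1 - θ1),
      mul_nonneg (mul_nonneg hθ1.le hπ.le) ha]
  · have hx : (0:ℝ) ≤ -t + π * a := by nlinarith [mul_nonneg hπ.le ha]
    have h1 : θ1 ^ 2 ≤ 1 := by nlinarith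
    nlinarith [mul_nonneg (sub_nonneg.2 h1) hx]
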